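/- Let S →^i (X, H) ←^o T and T →^{i'} (Y, G) ←^{o'} U be composable open Markov processes, and let j : X → Z, k : Y → Z exhibit Z as a pushout of o : T → X and i' : T → Y. Suppose v ∈ ℝ^X, I ∈ ℝ^S, O ∈ ℝ^T satisfy H(v) + i_*(I) − o_*(O) = 0, and v' ∈ ℝ^Y, O' ∈ ℝ^U satisfy G(v') + i'_*(O) − o'_*(O') = 0, with o^*(v) = i'^*(v'). Then there exists w ∈ ℝ^Z with j^*(w) = v, k^*(w) = v', and (H ⊙ G)(w) + (j∘i)_*(I) − (k∘o')_*(O') = 0, where H ⊙ G = j_* H j^* + k_* G k^*. -/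
import Mathlib


open scoped BigOperators

noncomputable section

/-- The pushforward of vectors along a map of finite sets:
`(f_* v) b = ∑_{a : f a = b} v a`. -/
def pushforward {A B : Type} [Fintype A] [DecidableEq B] (f : A → B) :
    (A → ℝ) →ₗ[ℝ] (B → ℝ) where
  toFun v := fun b => ∑ a ∈ Finset.univ.filter (fun a => f a = b), v a
  map_add' u v := by
    funext b
    simp [Finset.sum_add_distrib]
  map_smul' c v := by
    funext b
    simp [Finset.mul_sum]

/-- The pullback of vectors along a map of finite sets: `f^* v = v ∘ f`. -/
def pullback {A B : Type} (f : A → B) : (B → ℝ) →ₗ[ℝ] (A → ℝ) where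
  toFun v := v ∘ f
  map_add' _ _ := rfl
  map_smul' _ _ := rfl

/-- A probability distribution on a finite set: nonnegative components summing to 1. -/
def IsProbDist {A : Type} [Fintype A] (v : A → ℝ) : Prop :=
  (∀ a, 0 ≤ v a) ∧ ∑ a, v a = 1

/-- A linear operator is stochastic if it maps probability distributions to
probability distributions. -/
def IsStochasticOp {A B : Type} [Fintype A] [Fintype B]
    (T : (A → ℝ) →ₗ[ℝ] (B → ℝ)) : Prop :=
  ∀ v, IsProbDist v → IsProbDist (T v)

/-- An operator `H` is infinitesimal stochastic if its off-diagonal matrix entries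
`H_{ij} = (H e_j) i` are nonnegative and each column sums to zero. -/
def IsInfinitesimalStochastic {A : Type} [Fintype A] [DecidableEq A]
    (H : (A → ℝ) →ₗ[ℝ] (A → ℝ)) : Prop :=
  (∀ i j, i ≠ j → 0 ≤ H (Pi.single j 1) i) ∧ ∀ j, ∑ i, H (Pi.single j 1) i = 0

/-- A stochastic section for `p : X → X'` is a stochastic operator
`s : ℝ^{X'} → ℝ^X` with `p_* ∘ s = 1`. -/
def IsStochasticSection {X X' : Type} [Fintype X] [Fintype X'] [DecidableEq X']
    (p : X → X') (s : (X' → ℝ) →ₗ[ℝ] (X → ℝ)) : Prop :=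
  IsStochasticOp s ∧ pushforward p ∘ₗ s = LinearMap.id

/-- A matrix is stochastic if it maps probability distributions to probability
distributions. -/
def IsStochasticMat {A B : Type} [Fintype A] [Fintype B] (T : Matrix B A ℝ) : Prop :=
  ∀ v, IsProbDist v → IsProbDist (T.mulVec v)

/-- A matrix is infinitesimal stochastic if its off-diagonal entries are nonnegative
and its columns sum to zero. -/
def IsInfStochMat {A : Type} [Fintype A] (H : Matrix A A ℝ) : Prop :=
  (∀ i j, i ≠ j → 0 ≤ H i j) ∧ ∀ j, ∑ i, H i j = 0

/-- A Markov semigroup: a continuous one-parameter semigroup of stochastic matrices. -/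
def IsMarkovSemigroup {A : Type} [Fintype A] [DecidableEq A] (U : ℝ → Matrix A A ℝ) : Prop :=
  (∀ t : ℝ, 0 ≤ t → IsStochasticMat (U t)) ∧ U 0 = 1 ∧
    (∀ s t : ℝ, 0 ≤ s → 0 ≤ t → U (s + t) = U s * U t) ∧
    ∀ v : A → ℝ, ContinuousOn (fun t => (U t).mulVec v) (Set.Ici 0)

/-- The (matrix of the) pushforward along `f`. -/
def pushMat {A B : Type} [DecidableEq B] (f : A → B) : Matrix B A ℝ :=
  Matrix.of fun b a => if f a = b then 1 else 0

/-- A commuting square of maps that is a pullback: every compatible pair has a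
unique common preimage. -/
def IsPullbackSquare {A B C D : Type} (f : A → B) (g : A → C) (h : B → D) (k : C → D) : Prop :=
  (∀ a, h (f a) = k (g a)) ∧ ∀ (b : B) (c : C), h b = k c → ∃! a, f a = b ∧ g a = c

/-- A commuting square of maps satisfying the universal property of a pushout. -/
def IsPushoutSquare {T X Y Z : Type} (o : T → X) (i' : T → Y) (j : X → Z) (k : Y → Z) : Prop :=
  (∀ t, j (o t) = k (i' t)) ∧
    ∀ (W : Type) (u : X → W) (u' : Y → W), (∀ t, u (o t) = u' (i' t)) →
      ∃! w : Z → W, (∀ x, w (j x) = u x) ∧ ∀ y, w (k y) = u' y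

/-- The black-boxing of an open Markov process `S → (X,H) ← T`: the set of
steady-state boundary data `(i^* v, I, o^* v, O)`. -/
def blackBox {S X T : Type} [Fintype S] [Fintype T] [DecidableEq X]
    (i : S → X) (o : T → X) (H : (X → ℝ) →ₗ[ℝ] (X → ℝ)) :
    Set ((S → ℝ) × (S → ℝ) × (T → ℝ) × (T → ℝ)) :=
  {w | ∃ (v : X → ℝ) (I : S → ℝ) (O : T → ℝ),
    H v + pushforward i I - pushforward o O = 0 ∧
    w = (pullback i v, I, pullback o v, O)}

/-- The direct sum of two operators, under the canonical identification
`ℝ^{X ⊕ Y} ≃ ℝ^X ⊕ ℝ^Y`. -/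
def dsum {A B : Type} (H : (A → ℝ) →ₗ[ℝ] (A → ℝ)) (G : (B → ℝ) →ₗ[ℝ] (B → ℝ)) :
    (A ⊕ B → ℝ) →ₗ[ℝ] (A ⊕ B → ℝ) :=
  (LinearEquiv.sumArrowLequivProdArrow A B ℝ ℝ).symm.toLinearMap ∘ₗ
    (H.prodMap G) ∘ₗ (LinearEquiv.sumArrowLequivProdArrow A B ℝ ℝ).toLinearMap

theorem pushforward_comp {A B C : Type} [Fintype A] [Fintype B] [DecidableEq B]
    [DecidableEq C] (f : B → C) (g : A → B) (v : A → ℝ) :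
    pushforward f (pushforward g v) = pushforward (f ∘ g) v := by
  funext c
  simp only [pushforward, LinearMap.coe_mk, AddHom.coe_mk, Function.comp]
  simp only [Finset.sum_filter]
  have h : ∀ b : B, (if f b = c then ∑ a : A, (if g a = b then v a else 0) else 0)
      = ∑ a : A, if g a = b then (if f b = c then v a else 0) else 0 := by
    intro b; split <;> simp
  simp only [h]
  rw [Finset.sum_comm]
  congr 1
  funext a
  rw [Finset.sum_ite_eq Finset.univ (g a) (fun b => if f b = c then v a else 0)]
  simp

/-- Compatible steady states of two composable open Markov processes
glue to a steady state of the composite. -/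
theorem composite_steady_state_exists
    {S X T Y U Z : Type}
    [Fintype S] [Fintype X] [Fintype T] [Fintype Y] [Fintype U]
    [DecidableEq X] [DecidableEq Y] [DecidableEq Z]
    (i : S → X) (o : T → X) (hi : Function.Injective i) (ho : Function.Injective o)
    (H : (X → ℝ) →ₗ[ℝ] (X → ℝ)) (hH : IsInfinitesimalStochastic H)
    (i' : T → Y) (o' : U → Y) (hi' : Function.Injective i') (ho' : Function.Injective o')
    (G : (Y → ℝ) →ₗ[ℝ] (Y → ℝ)) (hG : IsInfinitesimalStochastic G)
    (j : X → Z) (k : Y → Z) (hpo : IsPushoutSquare o i' j k)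
    (v : X → ℝ) (I : S → ℝ) (O : T → ℝ) (v' : Y → ℝ) (O' : U → ℝ)
    (hv : H v + pushforward i I - pushforward o O = 0)
    (hv' : G v' + pushforward i' O - pushforward o' O' = 0)
    (hagree : pullback o v = pullback i' v') :
    ∃ w : Z → ℝ, pullback j w = v ∧ pullback k w = v' ∧
      (pushforward j ∘ₗ H ∘ₗ pullback j + pushforward k ∘ₗ G ∘ₗ pullback k) w
          + pushforward (j ∘ i) I - pushforward (k ∘ o') O' = 0 := by
  obtain ⟨hcomm, huniv⟩ := hpo
  have hag : ∀ t, v (o t) = v' (i' t) := fun t => congrFun hagree t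
  obtain ⟨w, ⟨hwj, hwk⟩, -⟩ := huniv ℝ v v' hag
  refine ⟨w, funext hwj, funext hwk, ?_⟩
  have h1 : pullback j w = v := funext hwj
  have h2 : pullback k w = v' := funext hwk
  have e1 : pushforward j (H v + pushforward i I - pushforward o O) = 0 := by
    rw [hv, map_zero]
  have e2 : pushforward k (G v' + pushforward i' O - pushforward o' O') = 0 := by
    rw [hv', map_zero]
  have key : ∀ t, j (o t) = k (i' t) := hcomm
  simp only [map_add, map_sub] at e1 e2
  have hoc : pushforward j (pushforward o O) = pushforward k (pushforward i' O) := by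
    rw [pushforward_comp, pushforward_comp]
    have : j ∘ o = k ∘ i' := funext key
    rw [this]
  simp only [LinearMap.add_apply, LinearMap.comp_apply, h1, h2]
  rw [← pushforward_comp j i, ← pushforward_comp k o']
  have := congrArg₂ (· + ·) e1 e2
  simp only [add_zero] at this
  funext z
  have hz := congrFun this z
  simp only [Pi.add_apply, Pi.sub_apply, Pi.zero_apply] at hz ⊢
  have hoz := congrFun hoc z
  linarith

end
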